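/- Let v: S → ℂ be a smooth map on an open Riemann surface satisfying, in local holomorphic coordinates z = s + it, the equation ∂_t v - i ∂_s v = γ(∂_s) + i γ(∂_t) for a real one-form γ with dγ ≤ 0 (with respect to the complex orientation). Then the real part p = re(v) satisfies Δp = -dγ(∂_s, ∂_t) ≥ 0, i.e., p is subharmonic. -/
import Mathlib


/-- If `v : S → ℂ` satisfies the perturbed Cauchy–Riemann equation
`∂_t v - i ∂_s v = γ(∂_s) + i γ(∂_t)` in local holomorphic coordinates `z = s + it`,
for a real one-form `γ = γ1 ds + γ2 dt` with `dγ ≤ 0` (i.e. `∂_s γ2 - ∂_t γ1 ≤ 0`), then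
`Δ re(v) = -dγ(∂_s, ∂_t) ≥ 0`: the real part of `v` is subharmonic. -/
theorem stmt_7
    (v vs vt vss vtt vst vts : ℝ → ℝ → ℂ)
    (γ1 γ2 g1s g1t g2s g2t : ℝ → ℝ → ℝ)
    (hvs : ∀ s t, HasDerivAt (fun s' => v s' t) (vs s t) s)
    (hvt : ∀ s t, HasDerivAt (fun t' => v s t') (vt s t) t)
    (hvss : ∀ s t, HasDerivAt (fun s' => vs s' t) (vss s t) s)
    (hvtt : ∀ s t, HasDerivAt (fun t' => vt s t') (vtt s t) t)
    (hvst : ∀ s t, HasDerivAt (fun t' => vs s t') (vst s t) t)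
    (hvts : ∀ s t, HasDerivAt (fun s' => vt s' t) (vts s t) s)
    (hcomm : ∀ s t, vst s t = vts s t)
    (hg1s : ∀ s t, HasDerivAt (fun s' => γ1 s' t) (g1s s t) s)
    (hg1t : ∀ s t, HasDerivAt (fun t' => γ1 s t') (g1t s t) t)
    (hg2s : ∀ s t, HasDerivAt (fun s' => γ2 s' t) (g2s s t) s)
    (hg2t : ∀ s t, HasDerivAt (fun t' => γ2 s t') (g2t s t) t)
    (heq : ∀ s t, vt s t - Complex.I * vs s t = (γ1 s t : ℂ) + Complex.I * (γ2 s t : ℂ))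
    (hdγ : ∀ s t, g2s s t - g1t s t ≤ 0) :
    ∀ s t, (vss s t).re + (vtt s t).re = -(g2s s t - g1t s t) ∧
      0 ≤ (vss s t).re + (vtt s t).re := by
  intro s t
  -- derivative in t of the PDE
  have hA : HasDerivAt (fun t' => vt s t' - Complex.I * vs s t')
      (vtt s t - Complex.I * vst s t) t :=
    (hvtt s t).sub ((hvst s t).const_mul _)
  have hB : HasDerivAt (fun t' => (γ1 s t' : ℂ) + Complex.I * (γ2 s t' : ℂ))
      ((g1t s t : ℂ) + Complex.I * (g2t s t : ℂ)) t :=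
    ((hg1t s t).ofReal_comp).add (((hg2t s t).ofReal_comp).const_mul _)
  have hB' : HasDerivAt (fun t' => vt s t' - Complex.I * vs s t')
      ((g1t s t : ℂ) + Complex.I * (g2t s t : ℂ)) t := by
    simpa only [heq s] using hB
  have e1 : vtt s t - Complex.I * vst s t = (g1t s t : ℂ) + Complex.I * (g2t s t : ℂ) :=
    hA.unique hB'
  -- derivative in s of the PDE
  have hC : HasDerivAt (fun s' => vt s' t - Complex.I * vs s' t)
      (vts s t - Complex.I * vss s t) s :=
    (hvts s t).sub ((hvss s t).const_mul _)
  have hD : HasDerivAt (fun s' => (γ1 s' t : ℂ) + Complex.I * (γ2 s' t : ℂ))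
      ((g1s s t : ℂ) + Complex.I * (g2s s t : ℂ)) s :=
    ((hg1s s t).ofReal_comp).add (((hg2s s t).ofReal_comp).const_mul _)
  have hD' : HasDerivAt (fun s' => vt s' t - Complex.I * vs s' t)
      ((g1s s t : ℂ) + Complex.I * (g2s s t : ℂ)) s := by
    simpa only [fun s' => heq s' t] using hD
  have e2 : vts s t - Complex.I * vss s t = (g1s s t : ℂ) + Complex.I * (g2s s t : ℂ) :=
    hC.unique hD'
  have r1 : (vtt s t).re + (vst s t).im = g1t s t := by
    have := congrArg Complex.re e1
    simpa [Complex.sub_re, Complex.mul_re, Complex.I_re, Complex.I_im, sub_eq_add_neg] using this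
  have r2 : (vts s t).im - (vss s t).re = g2s s t := by
    have := congrArg Complex.im e2
    simpa [Complex.sub_im, Complex.mul_im, Complex.I_re, Complex.I_im] using this
  have key : (vss s t).re + (vtt s t).re = -(g2s s t - g1t s t) := by
    have hc : (vst s t).im = (vts s t).im := by rw [hcomm s t]
    linarith [r1, r2]
  exact ⟨key, by linarith [hdγ s t, key]⟩
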